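/- Let J, K be positive integers, let α₁, …, α_{J+K} > 0, and let μ₀ be the Gaussian measure on ℝ^{J+K} with mean zero and covariance D = diag(α₁, …, α_{J+K}). Fix β ∈ (0, 1) and a symmetric positive definite J × J matrix Σ. Let q be the Markov kernel on ℝ^{J+K} where, given u, the proposal v has components v_i = u_i + β w_i for i = 1, …, J with (w₁, …, w_J) ∼ N(0, Σ), and v_i = √(1 − β²) u_i + β w_i for i = J+1, …, J+K with w_i ∼ N(0, α_i), all independent. Let Φ : ℝ^{J+K} → ℝ be measurable with exp(−Φ) integrable with respect to μ₀, and let μ be the probability measure with dμ/dμ₀ = exp(−Φ)/Z, Z = ∫ exp(−Φ) dμ₀. Set η = μ ⊗ₖ q and let η⊥ be the pushforward of η under the swap map (u, v) ↦ (v, u). Then η⊥ is absolutely continuous with respect to η, and for η-almost every (u, v), (dη⊥/dη)(u, v) = exp( Φ(u) − Φ(v) + (1/2) ∑_{i=1}^{J} (u_i² − v_i²)/α_i ). -/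

import Mathlib

open MeasureTheory ProbabilityTheory Matrix

/-- The Lebesgue density of the Gaussian `N(m, S)` on `ℝ^d`. -/
noncomputable def gaussianPDF (d : ℕ) (m : Fin d → ℝ) (S : Matrix (Fin d) (Fin d) ℝ)
    (x : Fin d → ℝ) : ℝ :=
  (2 * Real.pi) ^ (-(d : ℝ) / 2) * S.det ^ (-(1 : ℝ) / 2) *
    Real.exp (-(1 / 2) * ((x - m) ⬝ᵥ (S⁻¹ *ᵥ (x - m))))

/-- The Gaussian measure `N(m, S)` on `ℝ^d`, defined through its Lebesgue density. -/
noncomputable def gaussianMeasure (d : ℕ) (m : Fin d → ℝ) (S : Matrix (Fin d) (Fin d) ℝ) :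
    Measure (Fin d → ℝ) :=
  volume.withDensity fun x => ENNReal.ofReal (gaussianPDF d m S x)

/-- The block-diagonal covariance of the hybrid proposal: `Σ` on the first `J`
coordinates and `diag (α_{J+1}, …, α_{J+K})` on the remaining `K` coordinates. -/
noncomputable def hybridCov (J K : ℕ) (α : Fin (J + K) → ℝ)
    (Sm : Matrix (Fin J) (Fin J) ℝ) : Matrix (Fin (J + K)) (Fin (J + K)) ℝ :=
  Matrix.of fun i j =>
    if hi : (i : ℕ) < J then
      (if hj : (j : ℕ) < J then Sm ⟨i, hi⟩ ⟨j, hj⟩ else 0)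
    else (if i = j then α i else 0)

/-- The mean of the hybrid proposal started at `u`: the first `J` coordinates are
left unchanged (adaptive random walk) while the remaining ones are scaled by
`√(1 - β²)` (pCN). -/
noncomputable def hybridMean (J K : ℕ) (β : ℝ) (u : Fin (J + K) → ℝ) : Fin (J + K) → ℝ :=
  fun i => if (i : ℕ) < J then u i else Real.sqrt (1 - β ^ 2) * u i

lemma hybridCov_mul (J K : ℕ) (α : Fin (J + K) → ℝ) (hα : ∀ i, α i ≠ 0)
    (Sm : Matrix (Fin J) (Fin J) ℝ) (hSm : IsUnit Sm.det) :
    hybridCov J K α Sm * hybridCov J K (fun i => (α i)⁻¹) Sm⁻¹ = 1 := by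
  ext i j
  rw [Matrix.mul_apply]
  by_cases hi : (i : ℕ) < J
  · by_cases hj : (j : ℕ) < J
    · have : ∀ k : Fin (J + K), hybridCov J K α Sm i k * hybridCov J K (fun i => (α i)⁻¹) Sm⁻¹ k j
          = (fun k : Fin (J+K) => if hk : (k:ℕ) < J then Sm ⟨i, hi⟩ ⟨k, hk⟩ * Sm⁻¹ ⟨k, hk⟩ ⟨j, hj⟩ else 0) k := by
        intro k
        by_cases hk : (k : ℕ) < J <;> simp [hybridCov, hi, hj, hk]
      rw [Finset.sum_congr rfl fun k _ => this k]
      rw [Fin.sum_univ_add]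
      simp only [Fin.coe_castAdd, Fin.is_lt, dif_pos, Fin.coe_natAdd]
      have h2 : ∑ k : Fin K, (if hk : J + (k:ℕ) < J then Sm ⟨i, hi⟩ ⟨J + k, hk⟩ * Sm⁻¹ ⟨J + k, hk⟩ ⟨j, hj⟩ else 0) = 0 := by
        apply Finset.sum_eq_zero; intro k _; rw [dif_neg]; omega
      rw [h2, add_zero]
      simp only [Fin.eta]
      rw [← Matrix.mul_apply, Matrix.mul_nonsing_inv _ hSm]
      simp [Matrix.one_apply, Fin.ext_iff]
    · have : ∀ k : Fin (J + K), hybridCov J K α Sm i k * hybridCov J K (fun i => (α i)⁻¹) Sm⁻¹ k j = 0 := by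
        intro k
        by_cases hk : (k : ℕ) < J <;> simp [hybridCov, hi, hj, hk]
      rw [Finset.sum_congr rfl fun k _ => this k]
      have : i ≠ j := by intro h; rw [h] at hi; exact hj hi
      simp [Matrix.one_apply, this]
  · have : ∀ k : Fin (J + K), hybridCov J K α Sm i k * hybridCov J K (fun i => (α i)⁻¹) Sm⁻¹ k j
        = if i = k then α i * hybridCov J K (fun i => (α i)⁻¹) Sm⁻¹ k j else 0 := by
      intro k; simp only [hybridCov, Matrix.of_apply, dif_neg hi]
      split <;> simp
    rw [Finset.sum_congr rfl fun k _ => this k, Finset.sum_ite_eq Finset.univ i _]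
    simp only [Finset.mem_univ, if_true]
    by_cases hij : i = j
    · subst hij; simp [hybridCov, hi, Matrix.one_apply, hα i]
    · simp [hybridCov, hi, hij, Matrix.one_apply]

lemma diagonal_inv (n : ℕ) (α : Fin n → ℝ) (hα : ∀ i, α i ≠ 0) :
    (Matrix.diagonal α)⁻¹ = Matrix.diagonal (fun i => (α i)⁻¹) := by
  apply Matrix.inv_eq_right_inv
  rw [Matrix.diagonal_mul_diagonal]
  convert Matrix.diagonal_one using 2
  exact funext fun i => mul_inv_cancel₀ (hα i)

lemma hybridCov_inv (J K : ℕ) (α : Fin (J + K) → ℝ) (hα : ∀ i, α i ≠ 0)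
    (β : ℝ) (hβ : β ≠ 0) (Sm : Matrix (Fin J) (Fin J) ℝ) (hSm : IsUnit Sm.det) :
    ((β ^ 2) • hybridCov J K α Sm)⁻¹
      = ((β ^ 2)⁻¹ • hybridCov J K (fun i => (α i)⁻¹) Sm⁻¹) := by
  apply Matrix.inv_eq_right_inv
  rw [Matrix.smul_mul, Matrix.mul_smul, smul_smul,
    mul_inv_cancel₀ (pow_ne_zero 2 hβ), one_smul, hybridCov_mul J K α hα Sm hSm]

lemma hybridCov_mulVec (J K : ℕ) (α : Fin (J + K) → ℝ)
    (Sm : Matrix (Fin J) (Fin J) ℝ) (w : Fin (J + K) → ℝ) (i : Fin (J + K)) :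
    (hybridCov J K α Sm *ᵥ w) i
      = if h : (i : ℕ) < J then ∑ k : Fin J, Sm ⟨i, h⟩ k * w (Fin.castAdd K k)
        else α i * w i := by
  rw [Matrix.mulVec, dotProduct]
  by_cases h : (i : ℕ) < J
  · rw [dif_pos h, Fin.sum_univ_add]
    have h2 : ∑ k : Fin K, hybridCov J K α Sm i (Fin.natAdd J k) * w (Fin.natAdd J k) = 0 := by
      apply Finset.sum_eq_zero; intro k _
      have : ¬ ((Fin.natAdd J k : Fin (J+K)) : ℕ) < J := by simp
      simp [hybridCov, h, this]
    rw [h2, add_zero]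
    apply Finset.sum_congr rfl; intro k _
    have : ((Fin.castAdd K k : Fin (J+K)) : ℕ) < J := by simp [k.isLt]
    simp [hybridCov, h, this]
  · have : ∀ k : Fin (J + K), hybridCov J K α Sm i k * w k = if i = k then α i * w i else 0 := by
      intro k; simp only [hybridCov, Matrix.of_apply, dif_neg h]
      split_ifs with hik
      · subst hik; simp
      · simp
    rw [Finset.sum_congr rfl fun k _ => this k, Finset.sum_ite_eq Finset.univ i _]
    simp [h]

lemma quad_eval (J K : ℕ) (α : Fin (J + K) → ℝ) (hα : ∀ i, α i ≠ 0)
    (β : ℝ) (hβ : β ≠ 0) (Sm : Matrix (Fin J) (Fin J) ℝ) (hSm : IsUnit Sm.det)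
    (w : Fin (J + K) → ℝ) :
    w ⬝ᵥ (((β ^ 2) • hybridCov J K α Sm)⁻¹ *ᵥ w)
      = (β ^ 2)⁻¹ * ((∑ i : Fin J, ∑ k : Fin J,
          w (Fin.castAdd K i) * (Sm⁻¹ i k * w (Fin.castAdd K k)))
        + ∑ i : Fin K, w (Fin.natAdd J i) * ((α (Fin.natAdd J i))⁻¹ * w (Fin.natAdd J i))) := by
  rw [hybridCov_inv J K α hα β hβ Sm hSm, Matrix.smul_mulVec, dotProduct]
  simp only [Pi.smul_apply, smul_eq_mul]
  have : ∀ i, w i * ((β ^ 2)⁻¹ * (hybridCov J K (fun i => (α i)⁻¹) Sm⁻¹ *ᵥ w) i)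
      = (β ^ 2)⁻¹ * (w i * (hybridCov J K (fun i => (α i)⁻¹) Sm⁻¹ *ᵥ w) i) := by
    intro i; ring
  rw [Finset.sum_congr rfl fun i _ => this i, ← Finset.mul_sum]
  congr 1
  rw [Fin.sum_univ_add]
  congr 1
  · apply Finset.sum_congr rfl; intro i _
    rw [hybridCov_mulVec]
    have hi : ((Fin.castAdd K i : Fin (J+K)) : ℕ) < J := by simp [i.isLt]
    rw [dif_pos hi, Finset.mul_sum]
    apply Finset.sum_congr rfl; intro k _
    simp [mul_assoc]
  · apply Finset.sum_congr rfl; intro i _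
    rw [hybridCov_mulVec]
    have hi : ¬ ((Fin.natAdd J i : Fin (J+K)) : ℕ) < J := by simp
    rw [dif_neg hi]

lemma pcn_term (a b s βsq αi : ℝ) (hs : s ^ 2 = 1 - βsq) (hβ : βsq ≠ 0) (hα : αi ≠ 0) :
    b * (αi⁻¹ * b) + βsq⁻¹ * ((a - s * b) * (αi⁻¹ * (a - s * b)))
      = a * (αi⁻¹ * a) + βsq⁻¹ * ((b - s * a) * (αi⁻¹ * (b - s * a))) := by
  field_simp
  linear_combination (b ^ 2 - a ^ 2) * hs


lemma density_identity (J K : ℕ) (α : Fin (J + K) → ℝ) (hα : ∀ i, 0 < α i)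
    (β : ℝ) (hβ : β ∈ Set.Ioo (0 : ℝ) 1) (Sm : Matrix (Fin J) (Fin J) ℝ)
    (hSm : Sm.PosDef) (Φ : (Fin (J + K) → ℝ) → ℝ) (Z : ℝ)
    (u v : Fin (J + K) → ℝ) :
    (Real.exp (-Φ v) / Z * gaussianPDF (J + K) 0 (Matrix.diagonal α) v) *
        gaussianPDF (J + K) (hybridMean J K β v) ((β ^ 2) • hybridCov J K α Sm) u
      = Real.exp (Φ u - Φ v + (1 / 2) * ∑ i : Fin (J + K),
            if (i : ℕ) < J then (u i ^ 2 - v i ^ 2) / α i else 0) *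
        ((Real.exp (-Φ u) / Z * gaussianPDF (J + K) 0 (Matrix.diagonal α) u) *
          gaussianPDF (J + K) (hybridMean J K β u) ((β ^ 2) • hybridCov J K α Sm) v) := by
  obtain ⟨hβ0, hβ1⟩ := hβ
  have hβ0' : β ≠ 0 := ne_of_gt hβ0
  have hαne : ∀ i, α i ≠ 0 := fun i => (hα i).ne'
  have hSmdet' : IsUnit Sm.det := isUnit_iff_ne_zero.mpr hSm.det_pos.ne'
  have hs2 : Real.sqrt (1 - β ^ 2) ^ 2 = 1 - β ^ 2 :=
    Real.sq_sqrt (by nlinarith)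
  set s := Real.sqrt (1 - β ^ 2) with hsdef
  -- evaluate the diagonal quadratic form
  have hD : ∀ x : Fin (J + K) → ℝ, (x - 0) ⬝ᵥ ((Matrix.diagonal α)⁻¹ *ᵥ (x - 0))
      = ∑ i : Fin (J + K), x i * ((α i)⁻¹ * x i) := by
    intro x
    rw [sub_zero, diagonal_inv _ _ hαne, dotProduct]
    apply Finset.sum_congr rfl
    intro i _
    rw [Matrix.mulVec_diagonal]
  -- evaluate the mean
  have hm1 : ∀ (x : Fin (J + K) → ℝ) (i : Fin J),
      hybridMean J K β x (Fin.castAdd K i) = x (Fin.castAdd K i) := by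
    intro x i; simp [hybridMean, i.isLt]
  have hm2 : ∀ (x : Fin (J + K) → ℝ) (i : Fin K),
      hybridMean J K β x (Fin.natAdd J i) = s * x (Fin.natAdd J i) := by
    intro x i; simp [hybridMean, hsdef]
  -- evaluate the proposal quadratic form
  have hQ : ∀ x y : Fin (J + K) → ℝ,
      (y - hybridMean J K β x) ⬝ᵥ ((((β ^ 2) • hybridCov J K α Sm)⁻¹) *ᵥ (y - hybridMean J K β x))
        = (β ^ 2)⁻¹ * ((∑ i : Fin J, ∑ k : Fin J,
            (y (Fin.castAdd K i) - x (Fin.castAdd K i)) *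
              (Sm⁻¹ i k * (y (Fin.castAdd K k) - x (Fin.castAdd K k))))
          + ∑ i : Fin K, (y (Fin.natAdd J i) - s * x (Fin.natAdd J i)) *
              ((α (Fin.natAdd J i))⁻¹ * (y (Fin.natAdd J i) - s * x (Fin.natAdd J i)))) := by
    intro x y
    rw [quad_eval J K α hαne β hβ0' Sm hSmdet']
    congr 1
    congr 1
    · apply Finset.sum_congr rfl; intro i _; apply Finset.sum_congr rfl; intro k _
      rw [Pi.sub_apply, Pi.sub_apply, hm1, hm1]
    · apply Finset.sum_congr rfl; intro i _
      rw [Pi.sub_apply, hm2]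
  -- the exponent identity
  have hexp : (-(1/2) * ∑ i : Fin (J + K), v i * ((α i)⁻¹ * v i))
        + (-(1/2) * ((β ^ 2)⁻¹ * ((∑ i : Fin J, ∑ k : Fin J,
            (u (Fin.castAdd K i) - v (Fin.castAdd K i)) *
              (Sm⁻¹ i k * (u (Fin.castAdd K k) - v (Fin.castAdd K k))))
          + ∑ i : Fin K, (u (Fin.natAdd J i) - s * v (Fin.natAdd J i)) *
              ((α (Fin.natAdd J i))⁻¹ * (u (Fin.natAdd J i) - s * v (Fin.natAdd J i))))))
      = (1 / 2) * (∑ i : Fin (J + K),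
            if (i : ℕ) < J then (u i ^ 2 - v i ^ 2) / α i else 0)
        + ((-(1/2) * ∑ i : Fin (J + K), u i * ((α i)⁻¹ * u i))
        + (-(1/2) * ((β ^ 2)⁻¹ * ((∑ i : Fin J, ∑ k : Fin J,
            (v (Fin.castAdd K i) - u (Fin.castAdd K i)) *
              (Sm⁻¹ i k * (v (Fin.castAdd K k) - u (Fin.castAdd K k))))
          + ∑ i : Fin K, (v (Fin.natAdd J i) - s * u (Fin.natAdd J i)) *
              ((α (Fin.natAdd J i))⁻¹ * (v (Fin.natAdd J i) - s * u (Fin.natAdd J i))))))) := by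
    have hX : (∑ i : Fin J, ∑ k : Fin J,
            (u (Fin.castAdd K i) - v (Fin.castAdd K i)) *
              (Sm⁻¹ i k * (u (Fin.castAdd K k) - v (Fin.castAdd K k))))
        = (∑ i : Fin J, ∑ k : Fin J,
            (v (Fin.castAdd K i) - u (Fin.castAdd K i)) *
              (Sm⁻¹ i k * (v (Fin.castAdd K k) - u (Fin.castAdd K k)))) := by
      apply Finset.sum_congr rfl; intro i _; apply Finset.sum_congr rfl; intro k _; ring
    have hT : (∑ i : Fin (J + K),
          if (i : ℕ) < J then (u i ^ 2 - v i ^ 2) / α i else 0)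
        = ∑ i : Fin J, (u (Fin.castAdd K i) ^ 2 - v (Fin.castAdd K i) ^ 2) / α (Fin.castAdd K i) := by
      rw [Fin.sum_univ_add]
      have h1 : ∀ i : Fin K, (if ((Fin.natAdd J i : Fin (J + K)) : ℕ) < J
          then (u (Fin.natAdd J i) ^ 2 - v (Fin.natAdd J i) ^ 2) / α (Fin.natAdd J i) else 0) = 0 := by
        intro i; rw [if_neg]; simp
      rw [Finset.sum_congr rfl fun i _ => h1 i, Finset.sum_const_zero, add_zero]
      apply Finset.sum_congr rfl; intro i _
      rw [if_pos (by simp [i.isLt])]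
    have hSD : ∀ x : Fin (J + K) → ℝ, (∑ i : Fin (J + K), x i * ((α i)⁻¹ * x i))
        = (∑ i : Fin J, x (Fin.castAdd K i) * ((α (Fin.castAdd K i))⁻¹ * x (Fin.castAdd K i)))
          + ∑ i : Fin K, x (Fin.natAdd J i) * ((α (Fin.natAdd J i))⁻¹ * x (Fin.natAdd J i)) := by
      intro x; rw [Fin.sum_univ_add]
    rw [hX, hT, hSD u, hSD v]
    -- now everything is in terms of Fin J / Fin K sums
    have hJpart : ∑ i : Fin J, (u (Fin.castAdd K i) ^ 2 - v (Fin.castAdd K i) ^ 2) / α (Fin.castAdd K i)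
        = (∑ i : Fin J, u (Fin.castAdd K i) * ((α (Fin.castAdd K i))⁻¹ * u (Fin.castAdd K i)))
          - ∑ i : Fin J, v (Fin.castAdd K i) * ((α (Fin.castAdd K i))⁻¹ * v (Fin.castAdd K i)) := by
      rw [← Finset.sum_sub_distrib]
      apply Finset.sum_congr rfl; intro i _; ring
    have hKpart : (∑ i : Fin K, v (Fin.natAdd J i) * ((α (Fin.natAdd J i))⁻¹ * v (Fin.natAdd J i)))
          + (β ^ 2)⁻¹ * ∑ i : Fin K, (u (Fin.natAdd J i) - s * v (Fin.natAdd J i)) *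
              ((α (Fin.natAdd J i))⁻¹ * (u (Fin.natAdd J i) - s * v (Fin.natAdd J i)))
        = (∑ i : Fin K, u (Fin.natAdd J i) * ((α (Fin.natAdd J i))⁻¹ * u (Fin.natAdd J i)))
          + (β ^ 2)⁻¹ * ∑ i : Fin K, (v (Fin.natAdd J i) - s * u (Fin.natAdd J i)) *
              ((α (Fin.natAdd J i))⁻¹ * (v (Fin.natAdd J i) - s * u (Fin.natAdd J i))) := by
      rw [Finset.mul_sum, Finset.mul_sum, ← Finset.sum_add_distrib, ← Finset.sum_add_distrib]
      apply Finset.sum_congr rfl; intro i _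
      have := pcn_term (u (Fin.natAdd J i)) (v (Fin.natAdd J i)) s (β ^ 2)
        (α (Fin.natAdd J i)) hs2 (pow_ne_zero 2 hβ0') (hαne _)
      linarith [this]
    rw [hJpart]
    linarith [hKpart]
  -- put it together
  simp only [_root_.gaussianPDF]
  rw [hD u, hD v, hQ u v, hQ v u]
  have key : Real.exp (-Φ v) * Real.exp (-(1/2) * ∑ i : Fin (J + K), v i * ((α i)⁻¹ * v i))
        * Real.exp (-(1/2) * ((β ^ 2)⁻¹ * ((∑ i : Fin J, ∑ k : Fin J,
            (u (Fin.castAdd K i) - v (Fin.castAdd K i)) *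
              (Sm⁻¹ i k * (u (Fin.castAdd K k) - v (Fin.castAdd K k))))
          + ∑ i : Fin K, (u (Fin.natAdd J i) - s * v (Fin.natAdd J i)) *
              ((α (Fin.natAdd J i))⁻¹ * (u (Fin.natAdd J i) - s * v (Fin.natAdd J i))))))
      = Real.exp (Φ u - Φ v + (1 / 2) * ∑ i : Fin (J + K),
            if (i : ℕ) < J then (u i ^ 2 - v i ^ 2) / α i else 0)
        * (Real.exp (-Φ u) * Real.exp (-(1/2) * ∑ i : Fin (J + K), u i * ((α i)⁻¹ * u i))
        * Real.exp (-(1/2) * ((β ^ 2)⁻¹ * ((∑ i : Fin J, ∑ k : Fin J,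
            (v (Fin.castAdd K i) - u (Fin.castAdd K i)) *
              (Sm⁻¹ i k * (v (Fin.castAdd K k) - u (Fin.castAdd K k))))
          + ∑ i : Fin K, (v (Fin.natAdd J i) - s * u (Fin.natAdd J i)) *
              ((α (Fin.natAdd J i))⁻¹ * (v (Fin.natAdd J i) - s * u (Fin.natAdd J i))))))) := by
    rw [← Real.exp_add, ← Real.exp_add, ← Real.exp_add, ← Real.exp_add, ← Real.exp_add]
    congr 1
    linarith [hexp]
  linear_combination ((2 * Real.pi) ^ (-((J + K : ℕ) : ℝ) / 2) * (Matrix.diagonal α).det ^ (-(1:ℝ) / 2)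
    * ((2 * Real.pi) ^ (-((J + K : ℕ) : ℝ) / 2) * ((β ^ 2) • hybridCov J K α Sm).det ^ (-(1:ℝ) / 2)) / Z) * key

lemma measurable_gaussianPDF_comp {E : Type*} [MeasurableSpace E] (d : ℕ)
    (S : Matrix (Fin d) (Fin d) ℝ) (f g : E → Fin d → ℝ)
    (hf : Measurable f) (hg : Measurable g) :
    Measurable fun e => gaussianPDF d (f e) S (g e) := by
  unfold _root_.gaussianPDF
  refine Measurable.mul measurable_const ?_
  refine Real.measurable_exp.comp (Measurable.const_mul ?_ _)
  simp only [dotProduct, Matrix.mulVec, Pi.sub_apply]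
  apply Finset.measurable_sum; intro i _
  apply Measurable.mul
  · exact ((measurable_pi_apply i).comp hg).sub ((measurable_pi_apply i).comp hf)
  · apply Finset.measurable_sum; intro k _
    exact Measurable.const_mul (((measurable_pi_apply k).comp hg).sub
      ((measurable_pi_apply k).comp hf)) _

lemma measurable_hybridMean (J K : ℕ) (β : ℝ) : Measurable (hybridMean J K β) := by
  apply measurable_pi_lambda; intro i
  unfold hybridMean
  by_cases h : (i : ℕ) < J
  · simp only [h, if_true]; exact measurable_pi_apply i
  · simp only [h, if_false]; exact (measurable_pi_apply i).const_mul _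

theorem aux_swap_density {X : Type*} [MeasurableSpace X] (vol : Measure X) [SigmaFinite vol]
    (p : X → ℝ) (kf : X → X → ℝ) (r : X × X → ℝ)
    (hpm : Measurable p) (hkfm : Measurable fun z : X × X => kf z.1 z.2)
    (hrm : Measurable r) (hpnn : ∀ x, 0 ≤ p x) (hrnn : ∀ z, 0 ≤ r z)
    (μ : Measure X) (hμ : μ = vol.withDensity fun u => ENNReal.ofReal (p u))
    [IsFiniteMeasure μ]
    (q : Kernel X X) [IsMarkovKernel q]
    (hqd : ∀ u, q u = vol.withDensity fun v => ENNReal.ofReal (kf u v))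
    (hid : ∀ u v, p v * kf v u = r (u, v) * (p u * kf u v)) :
    Measure.map Prod.swap (μ ⊗ₘ q) ≪ (μ ⊗ₘ q) ∧
      (Measure.map Prod.swap (μ ⊗ₘ q)).rnDeriv (μ ⊗ₘ q) =ᵐ[μ ⊗ₘ q]
        fun z => ENNReal.ofReal (r z) := by
  classical
  set m : Measure (X × X) := vol.prod vol with hmdef
  set H : X × X → ENNReal := fun z => ENNReal.ofReal (p z.1) * ENNReal.ofReal (kf z.1 z.2)
    with hHdef
  set H' : X × X → ENNReal := fun z => ENNReal.ofReal (p z.2) * ENNReal.ofReal (kf z.2 z.1)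
    with hH'def
  set R : X × X → ENNReal := fun z => ENNReal.ofReal (r z) with hRdef
  have hHm : Measurable H :=
    ((ENNReal.measurable_ofReal.comp (hpm.comp measurable_fst)).mul
      (ENNReal.measurable_ofReal.comp hkfm))
  have hkfm' : Measurable fun z : X × X => kf z.2 z.1 := hkfm.comp measurable_swap
  have hH'm : Measurable H' :=
    ((ENNReal.measurable_ofReal.comp (hpm.comp measurable_snd)).mul
      (ENNReal.measurable_ofReal.comp hkfm'))
  have hRm : Measurable R := ENNReal.measurable_ofReal.comp hrm
  -- the joint measure as a density over vol × vol
  have h3 : μ ⊗ₘ q = m.withDensity H := by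
    ext s hs
    rw [Measure.compProd_apply hs, withDensity_apply _ hs, ← lintegral_indicator hs]
    have hind : ∀ u v, (Prod.mk u ⁻¹' s).indicator (fun v => ENNReal.ofReal (kf u v)) v
        = s.indicator (fun z : X × X => ENNReal.ofReal (kf z.1 z.2)) (u, v) := by
      intro u v
      by_cases h : (u, v) ∈ s <;> simp [Set.indicator, h]
    have hGm : Measurable (s.indicator (fun z : X × X => ENNReal.ofReal (kf z.1 z.2))) :=
      (ENNReal.measurable_ofReal.comp hkfm).indicator hs
    have step1 : ∀ u, q u (Prod.mk u ⁻¹' s)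
        = ∫⁻ v, s.indicator (fun z : X × X => ENNReal.ofReal (kf z.1 z.2)) (u, v) ∂vol := by
      intro u
      rw [hqd u, withDensity_apply _ (measurable_prodMk_left hs),
        ← lintegral_indicator (measurable_prodMk_left hs)]
      exact lintegral_congr fun v => hind u v
    have hpm' : Measurable fun u => ENNReal.ofReal (p u) := ENNReal.measurable_ofReal.comp hpm
    have hFm : Measurable fun u => ∫⁻ v,
        s.indicator (fun z : X × X => ENNReal.ofReal (kf z.1 z.2)) (u, v) ∂vol :=
      Measurable.lintegral_prod_right (ν := vol) (f := fun u v =>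
        s.indicator (fun z : X × X => ENNReal.ofReal (kf z.1 z.2)) (u, v)) hGm
    rw [lintegral_congr step1, hμ,
      lintegral_withDensity_eq_lintegral_mul vol hpm' hFm,
      lintegral_prod _ (hHm.indicator hs).aemeasurable]
    apply lintegral_congr; intro u
    have hGu : Measurable fun v =>
        s.indicator (fun z : X × X => ENNReal.ofReal (kf z.1 z.2)) (u, v) :=
      hGm.comp measurable_prodMk_left
    rw [Pi.mul_apply, ← lintegral_const_mul _ hGu]
    apply lintegral_congr; intro v
    by_cases h : (u, v) ∈ s <;> simp [Set.indicator, h, hHdef]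
  -- the swapped measure
  have h4 : Measure.map Prod.swap (m.withDensity H) = m.withDensity H' := by
    ext s hs
    rw [Measure.map_apply measurable_swap hs, withDensity_apply _ (measurable_swap hs),
      ← lintegral_indicator (measurable_swap hs), withDensity_apply _ hs,
      ← lintegral_indicator hs]
    have : ∀ z : X × X, (Prod.swap ⁻¹' s).indicator H z = (s.indicator H') z.swap := by
      intro z
      by_cases h : z.swap ∈ s
      · rw [Set.indicator_of_mem h, Set.indicator_of_mem (by exact h)]
        simp [hHdef, hH'def]
      · rw [Set.indicator_of_notMem h, Set.indicator_of_notMem (by exact h)]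
    rw [lintegral_congr this, hmdef, lintegral_prod_swap]
  -- densities identity
  have h5 : H' = H * R := by
    funext z
    obtain ⟨u, v⟩ := z
    show ENNReal.ofReal (p v) * ENNReal.ofReal (kf v u)
      = (ENNReal.ofReal (p u) * ENNReal.ofReal (kf u v)) * ENNReal.ofReal (r (u, v))
    rw [← ENNReal.ofReal_mul (hpnn v), ← ENNReal.ofReal_mul (hpnn u),
      ← ENNReal.ofReal_mul' (hrnn (u, v))]
    congr 1
    rw [hid u v]; ring
  have hη' : Measure.map Prod.swap (μ ⊗ₘ q) = (μ ⊗ₘ q).withDensity R := by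
    rw [h3, h4, h5, withDensity_mul _ hHm hRm, ← h3]
  haveI hsfη : SigmaFinite (μ ⊗ₘ q) := by
    have : IsFiniteMeasure (μ ⊗ₘ q) := inferInstance
    infer_instance
  constructor
  · rw [hη']; exact withDensity_absolutelyContinuous _ _
  · rw [hη']; exact Measure.rnDeriv_withDensity _ hRm


/-- Proposition 2.1 of the paper, in the finite-dimensional setting: for the hybrid
proposal kernel (adaptive Metropolis with covariance `β²Σ` on the first `J` modes,
pCN on the remaining `K` modes), the swapped joint measure `η⊥` is absolutely
continuous with respect to `η = μ ⊗ₘ q`, with density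
`exp(Φ(u) − Φ(v) + ½ ∑_{i≤J} (u_i² − v_i²)/α_i)`. -/
theorem hybrid_acceptance_ratio
    (J K : ℕ) (hJ : 0 < J) (hK : 0 < K)
    (α : Fin (J + K) → ℝ) (hα : ∀ i, 0 < α i)
    (β : ℝ) (hβ : β ∈ Set.Ioo (0 : ℝ) 1)
    (Sm : Matrix (Fin J) (Fin J) ℝ) (hSm : Sm.PosDef)
    (μ₀ : Measure (Fin (J + K) → ℝ))
    (hμ₀ : μ₀ = gaussianMeasure (J + K) 0 (Matrix.diagonal α))
    (q : Kernel (Fin (J + K) → ℝ) (Fin (J + K) → ℝ)) [IsMarkovKernel q]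
    (hq : ∀ u, q u = gaussianMeasure (J + K) (hybridMean J K β u)
      ((β ^ 2) • hybridCov J K α Sm))
    (Φ : (Fin (J + K) → ℝ) → ℝ) (hΦ : Measurable Φ)
    (hint : Integrable (fun u => Real.exp (-Φ u)) μ₀)
    (Z : ℝ) (hZ : Z = ∫ u, Real.exp (-Φ u) ∂μ₀)
    (μ : Measure (Fin (J + K) → ℝ))
    (hμ : μ = μ₀.withDensity fun u => ENNReal.ofReal (Real.exp (-Φ u) / Z)) :
    Measure.map Prod.swap (μ ⊗ₘ q) ≪ (μ ⊗ₘ q) ∧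
      (Measure.map Prod.swap (μ ⊗ₘ q)).rnDeriv (μ ⊗ₘ q) =ᵐ[μ ⊗ₘ q]
        fun p => ENNReal.ofReal (Real.exp (Φ p.1 - Φ p.2 +
          (1 / 2) * ∑ i : Fin (J + K),
            if (i : ℕ) < J then (p.1 i ^ 2 - p.2 i ^ 2) / α i else 0)) := by
  have hZ0 : 0 ≤ Z := hZ ▸ integral_nonneg (fun u => (Real.exp_pos _).le)
  have hg₀m : Measurable (_root_.gaussianPDF (J + K) 0 (Matrix.diagonal α)) :=
    measurable_gaussianPDF_comp _ _ _ _ measurable_const measurable_id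
  have hpm : Measurable (fun u => Real.exp (-Φ u) / Z
      * _root_.gaussianPDF (J + K) 0 (Matrix.diagonal α) u) := by
    apply Measurable.mul _ hg₀m
    exact (hΦ.neg.exp).div_const Z
  have hkfm : Measurable fun z : (Fin (J + K) → ℝ) × (Fin (J + K) → ℝ) =>
      _root_.gaussianPDF (J + K) (hybridMean J K β z.1) ((β ^ 2) • hybridCov J K α Sm) z.2 :=
    measurable_gaussianPDF_comp _ _ _ _ ((measurable_hybridMean J K β).comp measurable_fst)
      measurable_snd
  have hrm : Measurable fun z : (Fin (J + K) → ℝ) × (Fin (J + K) → ℝ) =>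
      Real.exp (Φ z.1 - Φ z.2 + (1 / 2) * ∑ i : Fin (J + K),
        if (i : ℕ) < J then (z.1 i ^ 2 - z.2 i ^ 2) / α i else 0) := by
    apply Real.measurable_exp.comp
    apply Measurable.add ((hΦ.comp measurable_fst).sub (hΦ.comp measurable_snd))
    apply Measurable.const_mul
    apply Finset.measurable_sum; intro i _
    by_cases h : (i : ℕ) < J
    · simp only [h, if_true]
      exact ((((measurable_pi_apply i).comp measurable_fst).pow_const 2).sub
        (((measurable_pi_apply i).comp measurable_snd).pow_const 2)).div_const _
    · simp only [h, if_false]; exact measurable_const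
  have hg₀nn : ∀ x, 0 ≤ _root_.gaussianPDF (J + K) 0 (Matrix.diagonal α) x := by
    intro x
    have hdet : 0 ≤ (Matrix.diagonal α).det := by
      rw [Matrix.det_diagonal]
      exact Finset.prod_nonneg fun i _ => (hα i).le
    unfold _root_.gaussianPDF
    have h2pi : (0:ℝ) ≤ 2 * Real.pi := by positivity
    exact mul_nonneg (mul_nonneg (Real.rpow_nonneg h2pi _) (Real.rpow_nonneg hdet _))
      (Real.exp_nonneg _)
  have hpnn : ∀ x, 0 ≤ Real.exp (-Φ x) / Z
      * _root_.gaussianPDF (J + K) 0 (Matrix.diagonal α) x := by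
    intro x
    exact mul_nonneg (by positivity) (hg₀nn x)
  have h1 : μ = volume.withDensity fun u => ENNReal.ofReal (Real.exp (-Φ u) / Z
      * _root_.gaussianPDF (J + K) 0 (Matrix.diagonal α) u) := by
    rw [hμ, hμ₀]
    unfold gaussianMeasure
    have hA : Measurable fun x => ENNReal.ofReal
        (_root_.gaussianPDF (J + K) 0 (Matrix.diagonal α) x) :=
      ENNReal.measurable_ofReal.comp hg₀m
    have hB : Measurable fun u => ENNReal.ofReal (Real.exp (-Φ u) / Z) :=
      ENNReal.measurable_ofReal.comp ((hΦ.neg.exp).div_const Z)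
    rw [← withDensity_mul _ hA hB]
    congr 1
    funext u
    rw [Pi.mul_apply, ← ENNReal.ofReal_mul (hg₀nn u), mul_comm]
  haveI hfin : IsFiniteMeasure μ := by
    rw [hμ]
    exact isFiniteMeasure_withDensity_ofReal (hint.div_const Z).hasFiniteIntegral
  exact aux_swap_density volume
    (fun u => Real.exp (-Φ u) / Z * _root_.gaussianPDF (J + K) 0 (Matrix.diagonal α) u)
    (fun x y => _root_.gaussianPDF (J + K) (hybridMean J K β x)
      ((β ^ 2) • hybridCov J K α Sm) y)
    (fun z => Real.exp (Φ z.1 - Φ z.2 + (1 / 2) * ∑ i : Fin (J + K),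
        if (i : ℕ) < J then (z.1 i ^ 2 - z.2 i ^ 2) / α i else 0))
    hpm hkfm hrm hpnn (fun z => Real.exp_nonneg _) μ h1 q
    (fun u => by rw [hq u]; rfl)
    (fun u v => density_identity J K α hα β hβ Sm hSm Φ Z u v)
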